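/- In the bipartite graph G_V, the three white vertices x, y, z form a white asteroidal triple, and the minimum possible total length of three connecting paths (a path from x to y avoiding N(z), a path from x to z avoiding N(y), and a path from y to z avoiding N(x)) equals 10; in particular the minimum lengths of these three paths are 4, 4 and 2, so the total path length exceeds the number of vertices of G_V by 1. -/
import Mathlib

open SimpleGraph

/-- The bipartite graph corresponding to a binary matrix: black vertices are rows
(`Sum.inl`), white vertices are columns (`Sum.inr`), and row `i` is adjacent to
column `j` iff `M i j = true`. -/
def graphOf {m n : ℕ} (M : Fin m → Fin n → Bool) : SimpleGraph (Fin m ⊕ Fin n) :=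
  SimpleGraph.fromRel (fun p q => ∃ i j, p = Sum.inl i ∧ q = Sum.inr j ∧ M i j = true)

/-- An asteroidal triple: an independent set of three vertices such that every pair of
them is joined by a path avoiding the neighborhood of the third vertex. -/
def IsAsteroidalTriple {V : Type*} (G : SimpleGraph V) (u v w : V) : Prop :=
  u ≠ v ∧ u ≠ w ∧ v ≠ w ∧ ¬G.Adj u v ∧ ¬G.Adj u w ∧ ¬G.Adj v w ∧
  (∃ p : G.Walk u v, ∀ t ∈ p.support, ¬G.Adj w t) ∧
  (∃ p : G.Walk u w, ∀ t ∈ p.support, ¬G.Adj v t) ∧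
  (∃ p : G.Walk v w, ∀ t ∈ p.support, ¬G.Adj u t)

/-- Tucker's forbidden subgraph `G_V`: black vertices `a,b,c,d` (rows `0,1,2,3`) and
white vertices `x,y,z,u,v` (columns `0,1,2,3,4`), with edge set exactly
`{a,x},{a,u},{a,v},{b,u},{b,v},{b,y},{b,z},{c,v},{c,z},{d,u},{d,y}`. -/
def GV : SimpleGraph (Fin 4 ⊕ Fin 5) :=
  graphOf (fun i j => (!![true,false,false,true,true;
                          false,true,true,true,true;
                          false,false,true,false,true;
                          false,true,false,true,false] : Matrix (Fin 4) (Fin 5) Bool) i j)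

instance decGV : DecidableRel GV.Adj := fun u v =>
  decidable_of_iff _ (SimpleGraph.fromRel_adj _ u v).symm

/-- Potential-function lower bound for walks avoiding a neighborhood. -/
lemma walk_bound (f : Fin 4 ⊕ Fin 5 → ℕ) (w : Fin 4 ⊕ Fin 5)
    (hf : ∀ s t, GV.Adj s t → ¬GV.Adj w s → ¬GV.Adj w t → f t ≤ f s + 1) :
    ∀ {a b : Fin 4 ⊕ Fin 5} (p : GV.Walk a b),
      (∀ t ∈ p.support, ¬GV.Adj w t) → f b ≤ f a + p.length := by
  intro a b p
  induction p with
  | nil => simp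
  | @cons a c b h q ih =>
    intro hs
    have h1 : ¬GV.Adj w a := hs a (by simp)
    have h2 : ¬GV.Adj w c := hs c (by simp)
    have h3 : ∀ t ∈ q.support, ¬GV.Adj w t := fun t ht => hs t (by simp [ht])
    calc f b ≤ f c + q.length := ih h3
      _ ≤ (f a + 1) + q.length := by
          have := hf a c h h1 h2; omega
      _ = f a + (Walk.cons h q).length := by simp [Walk.length_cons]; omega

-- potential for x→y avoiding N(z) : allowed subgraph path x-a-u-d-y
def f1 : Fin 4 ⊕ Fin 5 → ℕ
  | Sum.inr 0 => 0
  | Sum.inl 0 => 1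
  | Sum.inr 3 => 2
  | Sum.inr 4 => 2
  | Sum.inl 3 => 3
  | Sum.inr 1 => 4
  | _ => 0

lemma hf1 : ∀ s t, GV.Adj s t → ¬GV.Adj (Sum.inr 2) s → ¬GV.Adj (Sum.inr 2) t →
    f1 t ≤ f1 s + 1 := by decide

-- potential for x→z avoiding N(y) : path x-a-v-c-z (and u)
def f2 : Fin 4 ⊕ Fin 5 → ℕ
  | Sum.inr 0 => 0
  | Sum.inl 0 => 1
  | Sum.inr 3 => 2
  | Sum.inr 4 => 2
  | Sum.inl 2 => 3
  | Sum.inr 2 => 4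
  | _ => 0

lemma hf2 : ∀ s t, GV.Adj s t → ¬GV.Adj (Sum.inr 1) s → ¬GV.Adj (Sum.inr 1) t →
    f2 t ≤ f2 s + 1 := by decide

-- potential for y→z avoiding N(x)
def f3 : Fin 4 ⊕ Fin 5 → ℕ
  | Sum.inr 1 => 0
  | Sum.inl 1 => 1
  | Sum.inl 3 => 1
  | Sum.inr 2 => 2
  | Sum.inr 3 => 2
  | Sum.inr 4 => 2
  | Sum.inl 2 => 3
  | _ => 0

lemma hf3 : ∀ s t, GV.Adj s t → ¬GV.Adj (Sum.inr 0) s → ¬GV.Adj (Sum.inr 0) t →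
    f3 t ≤ f3 s + 1 := by decide

-- explicit walks
def P1 : GV.Walk (Sum.inr 0) (Sum.inr 1) :=
  Walk.cons (by decide) (Walk.cons (by decide) (Walk.cons (by decide)
    (Walk.cons (by decide) (Walk.nil :  GV.Walk (Sum.inr 1) (Sum.inr 1))
      : GV.Walk (Sum.inl 3) (Sum.inr 1)) : GV.Walk (Sum.inr 3) (Sum.inr 1))
    : GV.Walk (Sum.inl 0) (Sum.inr 1))

def P2 : GV.Walk (Sum.inr 0) (Sum.inr 2) :=
  Walk.cons (show GV.Adj (Sum.inr 0) (Sum.inl 0) by decide)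
    (Walk.cons (show GV.Adj (Sum.inl 0) (Sum.inr 4) by decide)
      (Walk.cons (show GV.Adj (Sum.inr 4) (Sum.inl 2) by decide)
        (Walk.cons (show GV.Adj (Sum.inl 2) (Sum.inr 2) by decide) Walk.nil)))

def P3 : GV.Walk (Sum.inr 1) (Sum.inr 2) :=
  Walk.cons (show GV.Adj (Sum.inr 1) (Sum.inl 1) by decide)
    (Walk.cons (show GV.Adj (Sum.inl 1) (Sum.inr 2) by decide) Walk.nil)

lemma P1_avoid : ∀ t ∈ P1.support, ¬GV.Adj (Sum.inr 2) t := by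
  simp only [P1, Walk.support_cons, Walk.support_nil, List.mem_cons,
    List.not_mem_nil, or_false]
  rintro t (rfl | rfl | rfl | rfl | rfl) <;> decide

lemma P2_avoid : ∀ t ∈ P2.support, ¬GV.Adj (Sum.inr 1) t := by
  simp only [P2, Walk.support_cons, Walk.support_nil, List.mem_cons,
    List.not_mem_nil, or_false]
  rintro t (rfl | rfl | rfl | rfl | rfl) <;> decide

lemma P3_avoid : ∀ t ∈ P3.support, ¬GV.Adj (Sum.inr 0) t := by
  simp only [P3, Walk.support_cons, Walk.support_nil, List.mem_cons,
    List.not_mem_nil, or_false]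
  rintro t (rfl | rfl | rfl) <;> decide

/-- In `G_V` the white vertices `x, y, z` (columns `0, 1, 2`) form a white asteroidal
triple; the minimum lengths of the three connecting paths (each avoiding the
neighborhood of the third vertex) are `4`, `4` and `2`, so the minimum total length of
the three paths is `10`, which exceeds the number of vertices of `G_V` by `1`. -/
theorem GV_asteroidal_triple :
    IsAsteroidalTriple GV (Sum.inr 0) (Sum.inr 1) (Sum.inr 2) ∧
    ((∃ p : GV.Walk (Sum.inr 0) (Sum.inr 1),
        (∀ t ∈ p.support, ¬GV.Adj (Sum.inr 2) t) ∧ p.length = 4) ∧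
      ∀ p : GV.Walk (Sum.inr 0) (Sum.inr 1),
        (∀ t ∈ p.support, ¬GV.Adj (Sum.inr 2) t) → 4 ≤ p.length) ∧
    ((∃ p : GV.Walk (Sum.inr 0) (Sum.inr 2),
        (∀ t ∈ p.support, ¬GV.Adj (Sum.inr 1) t) ∧ p.length = 4) ∧
      ∀ p : GV.Walk (Sum.inr 0) (Sum.inr 2),
        (∀ t ∈ p.support, ¬GV.Adj (Sum.inr 1) t) → 4 ≤ p.length) ∧
    ((∃ p : GV.Walk (Sum.inr 1) (Sum.inr 2),
        (∀ t ∈ p.support, ¬GV.Adj (Sum.inr 0) t) ∧ p.length = 2) ∧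
      ∀ p : GV.Walk (Sum.inr 1) (Sum.inr 2),
        (∀ t ∈ p.support, ¬GV.Adj (Sum.inr 0) t) → 2 ≤ p.length) ∧
    ((∃ (p : GV.Walk (Sum.inr 0) (Sum.inr 1)) (q : GV.Walk (Sum.inr 0) (Sum.inr 2))
        (r : GV.Walk (Sum.inr 1) (Sum.inr 2)),
        (∀ t ∈ p.support, ¬GV.Adj (Sum.inr 2) t) ∧
        (∀ t ∈ q.support, ¬GV.Adj (Sum.inr 1) t) ∧
        (∀ t ∈ r.support, ¬GV.Adj (Sum.inr 0) t) ∧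
        p.length + q.length + r.length = 10) ∧
      ∀ (p : GV.Walk (Sum.inr 0) (Sum.inr 1)) (q : GV.Walk (Sum.inr 0) (Sum.inr 2))
        (r : GV.Walk (Sum.inr 1) (Sum.inr 2)),
        (∀ t ∈ p.support, ¬GV.Adj (Sum.inr 2) t) →
        (∀ t ∈ q.support, ¬GV.Adj (Sum.inr 1) t) →
        (∀ t ∈ r.support, ¬GV.Adj (Sum.inr 0) t) →
        10 ≤ p.length + q.length + r.length) ∧
    10 = Fintype.card (Fin 4 ⊕ Fin 5) + 1 := by
  have b1 : ∀ p : GV.Walk (Sum.inr 0) (Sum.inr 1),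
      (∀ t ∈ p.support, ¬GV.Adj (Sum.inr 2) t) → 4 ≤ p.length := by
    intro p hp
    have := walk_bound f1 (Sum.inr 2) hf1 p hp
    simpa [f1] using this
  have b2 : ∀ p : GV.Walk (Sum.inr 0) (Sum.inr 2),
      (∀ t ∈ p.support, ¬GV.Adj (Sum.inr 1) t) → 4 ≤ p.length := by
    intro p hp
    have := walk_bound f2 (Sum.inr 1) hf2 p hp
    simpa [f2] using this
  have b3 : ∀ p : GV.Walk (Sum.inr 1) (Sum.inr 2),
      (∀ t ∈ p.support, ¬GV.Adj (Sum.inr 0) t) → 2 ≤ p.length := by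
    intro p hp
    have := walk_bound f3 (Sum.inr 0) hf3 p hp
    simpa [f3] using this
  refine ⟨⟨by decide, by decide, by decide, by decide, by decide, by decide,
      ⟨P1, P1_avoid⟩, ⟨P2, P2_avoid⟩, ⟨P3, P3_avoid⟩⟩,
    ⟨⟨P1, P1_avoid, rfl⟩, b1⟩, ⟨⟨P2, P2_avoid, rfl⟩, b2⟩, ⟨⟨P3, P3_avoid, rfl⟩, b3⟩,
    ⟨⟨P1, P2, P3, P1_avoid, P2_avoid, P3_avoid, rfl⟩, ?_⟩, by simp⟩
  intro p q r hp hq hr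
  have := b1 p hp; have := b2 q hq; have := b3 r hr
  omega
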